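/- Fix m ≥ 1 and 1 ≤ k ≤ m. In the B^{Kh}_m-bimodule P_k^{Kh} ⊗_𝔽 _kP^{Kh}, the element c := u*⊗u + v*⊗v satisfies b·c = c·b for every b ∈ B^{Kh}_m. Consequently the map γ_k^{Kh}: B^{Kh}_m → P_k^{Kh} ⊗_𝔽 _kP^{Kh} defined by γ_k^{Kh}(b) := b·c is a homomorphism of B^{Kh}_m-bimodules (i.e. γ_k^{Kh}(b₁·b·b₂) = b₁·γ_k^{Kh}(b)·b₂ for all b₁, b, b₂), and it satisfies γ_k^{Kh}(1_{kk}) = u*⊗u, γ_k^{Kh}(1_{k-1,k-1}) = v*⊗v, γ_k^{Kh}(1_{ii}) = 0 for i ∉ {k-1, k}, and γ_k^{Kh}(x_{k,k-1}) = u*⊗v. -/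

import Mathlib

set_option maxHeartbeats 1000000

open Matrix

noncomputable section

namespace Stmt10
abbrev 𝔽 : Type := ZMod 2

/-- `𝔽[X]/(X²)`, modeled as the dual numbers over `𝔽 = ℤ/2ℤ`. -/
abbrev D : Type := DualNumber 𝔽

/-- The element `x + y·X` of `𝔽[X]/(X²)`. -/
def dn (x y : 𝔽) : D := TrivSqZeroExt.inl x + TrivSqZeroExt.inr y

abbrev MKh (m : ℕ) : Type := Matrix (Fin (m + 1)) (Fin (m + 1)) D
abbrev MHF (m : ℕ) : Type := Matrix (Fin (m + 1)) (Fin (m + 1)) (𝔽 × 𝔽)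

/-- `B^{Kh}_m`: lower triangular `(m+1)×(m+1)` matrices over `𝔽[X]/(X²)` whose
diagonal entries lie in `{0,1}`. -/
def BKh (m : ℕ) : Set (MKh m) :=
  {M | (∀ i j, i < j → M i j = 0) ∧ (∀ i, M i i = 0 ∨ M i i = 1)}

/-- `B^{HF}_m`: lower triangular `(m+1)×(m+1)` matrices over `𝔽 × 𝔽` whose
diagonal entries lie in `{(0,0),(1,1)}`. -/
def BHF (m : ℕ) : Set (MHF m) :=
  {M | (∀ i j, i < j → M i j = 0) ∧ (∀ i, M i i = 0 ∨ M i i = 1)}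

open Fin.NatCast in
/-- The index `k` as an element of `Fin (m+1)`. -/
def idx (m k : ℕ) : Fin (m + 1) := (k : Fin (m + 1))

/-- The left action of `B^{Kh}_m` on `P_k^{Kh}`; an element `α·u* + β·v*` is
recorded by its coordinates `(α, β)` in the basis `u*, v*`.  This is the unique
bilinear extension of the action table `1_{kk}·u* = u*`, `1_{k-1,k-1}·v* = v*`,
`x_{k,k-1}·v* = u*`, all other actions of pairs of basis elements being `0`. -/
def lActKh (m k : ℕ) (b : MKh m) (p : 𝔽 × 𝔽) : 𝔽 × 𝔽 :=
  ((b (idx m k) (idx m k)).fst * p.1 + (b (idx m k) (idx m (k - 1))).snd * p.2,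
   (b (idx m (k - 1)) (idx m (k - 1))).fst * p.2)

/-- The right action of `B^{Kh}_m` on `_kP^{Kh}`; an element `γ·u + δ·v` is
recorded by its coordinates `(γ, δ)` in the basis `u, v`.  This is the unique
bilinear extension of the action table `u·1_{kk} = u`, `u·x_{k,k-1} = v`,
`v·1_{k-1,k-1} = v`, all other actions of pairs of basis elements being `0`. -/
def rActKh (m k : ℕ) (q : 𝔽 × 𝔽) (a : MKh m) : 𝔽 × 𝔽 :=
  (q.1 * (a (idx m k) (idx m k)).fst,
   q.1 * (a (idx m k) (idx m (k - 1))).snd + q.2 * (a (idx m (k - 1)) (idx m (k - 1))).fst)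

/-- The left action of `B^{HF}_m` on `P_k^{HF}` (coordinates in the basis `u*, v*`):
the bilinear extension of `1_{kk}·u* = u*`, `1_{k-1,k-1}·v* = v*`,
`ρ_{k,k-1}·v* = σ_{k,k-1}·v* = u*`, all other actions of basis elements being `0`. -/
def lActHF (m k : ℕ) (b : MHF m) (p : 𝔽 × 𝔽) : 𝔽 × 𝔽 :=
  ((b (idx m k) (idx m k)).1 * p.1
      + ((b (idx m k) (idx m (k - 1))).1 + (b (idx m k) (idx m (k - 1))).2) * p.2,
   (b (idx m (k - 1)) (idx m (k - 1))).1 * p.2)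

/-- The right action of `B^{HF}_m` on `_kP^{HF}` (coordinates in the basis `u, v`):
the bilinear extension of `u·1_{kk} = u`, `u·ρ_{k,k-1} = u·σ_{k,k-1} = v`,
`v·1_{k-1,k-1} = v`, all other actions of basis elements being `0`. -/
def rActHF (m k : ℕ) (q : 𝔽 × 𝔽) (a : MHF m) : 𝔽 × 𝔽 :=
  (q.1 * (a (idx m k) (idx m k)).1,
   q.1 * ((a (idx m k) (idx m (k - 1))).1 + (a (idx m k) (idx m (k - 1))).2)
      + q.2 * (a (idx m (k - 1)) (idx m (k - 1))).1)

/-- The tensor product `P_k ⊗ _kP`: coordinates `(w₁, w₂, w₃, w₄)` in the basis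
`u*⊗u, u*⊗v, v*⊗u, v*⊗v`. -/
abbrev T4 : Type := 𝔽 × 𝔽 × 𝔽 × 𝔽

/-- Left action of `B^{Kh}_m` on `P_k^{Kh} ⊗ _kP^{Kh}`, via `b·(p⊗q) = (b·p)⊗q`. -/
def lActKhT (m k : ℕ) (b : MKh m) (w : T4) : T4 :=
  ((b (idx m k) (idx m k)).fst * w.1 + (b (idx m k) (idx m (k - 1))).snd * w.2.2.1,
   (b (idx m k) (idx m k)).fst * w.2.1 + (b (idx m k) (idx m (k - 1))).snd * w.2.2.2,
   (b (idx m (k - 1)) (idx m (k - 1))).fst * w.2.2.1,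
   (b (idx m (k - 1)) (idx m (k - 1))).fst * w.2.2.2)

/-- Right action of `B^{Kh}_m` on `P_k^{Kh} ⊗ _kP^{Kh}`, via `(p⊗q)·b = p⊗(q·b)`. -/
def rActKhT (m k : ℕ) (w : T4) (a : MKh m) : T4 :=
  (w.1 * (a (idx m k) (idx m k)).fst,
   w.1 * (a (idx m k) (idx m (k - 1))).snd + w.2.1 * (a (idx m (k - 1)) (idx m (k - 1))).fst,
   w.2.2.1 * (a (idx m k) (idx m k)).fst,
   w.2.2.1 * (a (idx m k) (idx m (k - 1))).snd + w.2.2.2 * (a (idx m (k - 1)) (idx m (k - 1))).fst)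

/-- Left action of `B^{HF}_m` on `P_k^{HF} ⊗ _kP^{HF}`. -/
def lActHFT (m k : ℕ) (b : MHF m) (w : T4) : T4 :=
  ((b (idx m k) (idx m k)).1 * w.1
      + ((b (idx m k) (idx m (k - 1))).1 + (b (idx m k) (idx m (k - 1))).2) * w.2.2.1,
   (b (idx m k) (idx m k)).1 * w.2.1
      + ((b (idx m k) (idx m (k - 1))).1 + (b (idx m k) (idx m (k - 1))).2) * w.2.2.2,
   (b (idx m (k - 1)) (idx m (k - 1))).1 * w.2.2.1,
   (b (idx m (k - 1)) (idx m (k - 1))).1 * w.2.2.2)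

/-- Right action of `B^{HF}_m` on `P_k^{HF} ⊗ _kP^{HF}`. -/
def rActHFT (m k : ℕ) (w : T4) (a : MHF m) : T4 :=
  (w.1 * (a (idx m k) (idx m k)).1,
   w.1 * ((a (idx m k) (idx m (k - 1))).1 + (a (idx m k) (idx m (k - 1))).2)
      + w.2.1 * (a (idx m (k - 1)) (idx m (k - 1))).1,
   w.2.2.1 * (a (idx m k) (idx m k)).1,
   w.2.2.1 * ((a (idx m k) (idx m (k - 1))).1 + (a (idx m k) (idx m (k - 1))).2)
      + w.2.2.2 * (a (idx m (k - 1)) (idx m (k - 1))).1)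

/-- `γ_k^{Kh} : B^{Kh}_m → P_k^{Kh} ⊗ _kP^{Kh}`, `b ↦ b·(u*⊗u + v*⊗v)`. -/
def γKh (m k : ℕ) (b : MKh m) : T4 := lActKhT m k b (1, 0, 0, 1)

/-- `γ_k^{HF} : B^{HF}_m → P_k^{HF} ⊗ _kP^{HF}`, `b ↦ b·(u*⊗u + v*⊗v)`. -/
def γHF (m k : ℕ) (b : MHF m) : T4 := lActHFT m k b (1, 0, 0, 1)

/-- `(β_k^{Kh})_{(1|1|0)} : B^{Kh}_m ⊗ (P_k^{Kh} ⊗ _kP^{Kh}) → B^{Kh}_m`: the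
bilinear map given on pairs of basis elements by `(1_{ik}, u*⊗u) ↦ x_{ik}` (`i ≥ k+1`),
`(1_{i,k-1}, v*⊗u) ↦ 1_{ik}` (`i ≥ k`), `(x_{i,k-1}, v*⊗u) ↦ x_{ik}` (`i ≥ k+1`),
`(1_{i,k-1}, v*⊗v) ↦ x_{i,k-1}` (`i ≥ k`), all other values being `0`. -/
def βKh1 (m k : ℕ) (b : MKh m) (w : T4) : MKh m :=
  (∑ i : Fin (m + 1), if k < (i : ℕ) then
      single i (idx m k)
        (dn ((b i (idx m (k - 1))).fst * w.2.2.1)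
            ((b i (idx m k)).fst * w.1 + (b i (idx m (k - 1))).snd * w.2.2.1)) else 0)
  + single (idx m k) (idx m k) (dn ((b (idx m k) (idx m (k - 1))).fst * w.2.2.1) 0)
  + ∑ i : Fin (m + 1), if k ≤ (i : ℕ) then
      single i (idx m (k - 1)) (dn 0 ((b i (idx m (k - 1))).fst * w.2.2.2)) else 0

/-- `(β_k^{Kh})_{(0|1|1)} : (P_k^{Kh} ⊗ _kP^{Kh}) ⊗ B^{Kh}_m → B^{Kh}_m`: the
bilinear map given on pairs of basis elements by `(u*⊗u, 1_{kj}) ↦ x_{kj}` (`j ≤ k-1`),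
`(v*⊗u, 1_{kj}) ↦ 1_{k-1,j}` (`j ≤ k-1`), `(v*⊗u, x_{kj}) ↦ x_{k-1,j}` (`j ≤ k-2`),
`(v*⊗v, 1_{k-1,j}) ↦ x_{k-1,j}` (`j ≤ k-2`), all other values being `0`. -/
def βKh2 (m k : ℕ) (w : T4) (a : MKh m) : MKh m :=
  (∑ j : Fin (m + 1), if (j : ℕ) < k then
      single (idx m k) j (dn 0 (w.1 * (a (idx m k) j).fst)) else 0)
  + (∑ j : Fin (m + 1), if (j : ℕ) < k then
      single (idx m (k - 1)) j (dn (w.2.2.1 * (a (idx m k) j).fst) 0) else 0)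
  + ∑ j : Fin (m + 1), if (j : ℕ) < k - 1 then
      single (idx m (k - 1)) j
        (dn 0 (w.2.2.1 * (a (idx m k) j).snd + w.2.2.2 * (a (idx m (k - 1)) j).fst)) else 0

/-- `(β_k^{HF})_{(1|1|0)} : B^{HF}_m ⊗ (P_k^{HF} ⊗ _kP^{HF}) → B^{HF}_m`: the
bilinear map given on pairs of basis elements by `(ρ_{ik}, u*⊗u) ↦ ρ_{ik}` (`i ≥ k+1`),
`(σ_{k,k-1}, v*⊗u) ↦ 1_{kk}`, `(ρ_{i,k-1}, v*⊗u) ↦ ρ_{ik}` (`i ≥ k+1`),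
`(σ_{i,k-1}, v*⊗u) ↦ σ_{ik}` (`i ≥ k+1`), `(ρ_{i,k-1}, v*⊗v) ↦ ρ_{i,k-1}` (`i ≥ k`),
all other values being `0`. -/
def βHF1 (m k : ℕ) (b : MHF m) (w : T4) : MHF m :=
  (∑ i : Fin (m + 1), if k < (i : ℕ) then
      single i (idx m k)
        ((b i (idx m k)).1 * w.1 + (b i (idx m (k - 1))).1 * w.2.2.1,
         (b i (idx m (k - 1))).2 * w.2.2.1) else 0)
  + single (idx m k) (idx m k)
      ((b (idx m k) (idx m (k - 1))).2 * w.2.2.1, (b (idx m k) (idx m (k - 1))).2 * w.2.2.1)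
  + ∑ i : Fin (m + 1), if k ≤ (i : ℕ) then
      single i (idx m (k - 1)) ((b i (idx m (k - 1))).1 * w.2.2.2, 0) else 0

/-- `(β_k^{HF})_{(0|1|1)} : (P_k^{HF} ⊗ _kP^{HF}) ⊗ B^{HF}_m → B^{HF}_m`: the
bilinear map given on pairs of basis elements by `(u*⊗u, ρ_{kj}) ↦ ρ_{kj}` (`j ≤ k-1`),
`(v*⊗u, σ_{k,k-1}) ↦ 1_{k-1,k-1}`, `(v*⊗u, ρ_{kj}) ↦ ρ_{k-1,j}` (`j ≤ k-2`),
`(v*⊗u, σ_{kj}) ↦ σ_{k-1,j}` (`j ≤ k-2`), `(v*⊗v, ρ_{k-1,j}) ↦ ρ_{k-1,j}` (`j ≤ k-2`),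
all other values being `0`. -/
def βHF2 (m k : ℕ) (w : T4) (a : MHF m) : MHF m :=
  (∑ j : Fin (m + 1), if (j : ℕ) < k then
      single (idx m k) j (w.1 * (a (idx m k) j).1, 0) else 0)
  + single (idx m (k - 1)) (idx m (k - 1))
      (w.2.2.1 * (a (idx m k) (idx m (k - 1))).2, w.2.2.1 * (a (idx m k) (idx m (k - 1))).2)
  + ∑ j : Fin (m + 1), if (j : ℕ) < k - 1 then
      single (idx m (k - 1)) j
        (w.2.2.1 * (a (idx m k) j).1 + w.2.2.2 * (a (idx m (k - 1)) j).1,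
         w.2.2.1 * (a (idx m k) j).2) else 0

/-- The left action on the mapping cone `(P_k^{Kh} ⊗ _kP^{Kh}) ⊕ B^{Kh}_m`,
`a·(w, b) := (a·w, β₁(a,w) + a·b)`. -/
def coneLKh (m k : ℕ) (a : MKh m) (p : T4 × MKh m) : T4 × MKh m :=
  (lActKhT m k a p.1, βKh1 m k a p.1 + a * p.2)

/-- The right action on the mapping cone, `(w, b)·a := (w·a, β₂(w,a) + b·a)`. -/
def coneRKh (m k : ℕ) (p : T4 × MKh m) (a : MKh m) : T4 × MKh m :=
  (rActKhT m k p.1 a, βKh2 m k p.1 a + p.2 * a)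

def coneLHF (m k : ℕ) (a : MHF m) (p : T4 × MHF m) : T4 × MHF m :=
  (lActHFT m k a p.1, βHF1 m k a p.1 + a * p.2)

def coneRHF (m k : ℕ) (p : T4 × MHF m) (a : MHF m) : T4 × MHF m :=
  (rActHFT m k p.1 a, βHF2 m k p.1 a + p.2 * a)

/-- The degree-0 identification `ℱ₀(B^{HF}_m) ≅ (degree-0 part of B^{Kh}_m)`,
sending `1_{ii}, 1_{ij} = ρ_{ij} + σ_{ij}` to `1_{ii}, 1_{ij}`: on matrix entries,
`(c, c) ↦ c`. -/
def σ0 (m : ℕ) (M : MHF m) : MKh m := Matrix.of fun i j => dn ((M i j).1) 0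

/-- The degree-1 identification `ℱ₁/ℱ₀(B^{HF}_m) ≅ (degree-1 part of B^{Kh}_m)`,
sending the class `[ρ_{ij}]` to `x_{ij}`: on matrix entries, `(r, s) ↦ (r+s)·X`
(which kills `ℱ₀` and sends `ρ_{ij}`, and any representative of `[ρ_{ij}]`, to `x_{ij}`). -/
def σ1 (m : ℕ) (M : MHF m) : MKh m := Matrix.of fun i j => dn 0 ((M i j).1 + (M i j).2)

/-- `ℱ₀(B^{HF}_m)`: the 𝔽-span of the `1_{ii}` and the `1_{ij} = ρ_{ij} + σ_{ij}`,
i.e. lower triangular matrices all of whose entries lie in `𝔽·(1,1)`. -/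
def F0HF (m : ℕ) : Set (MHF m) :=
  {M | (∀ i j, i < j → M i j = 0) ∧ ∀ i j, (M i j).1 = (M i j).2}

/-- The filtration `ℱ_{-1} = 0 ⊆ ℱ₀ ⊆ ℱ₁ = B^{HF}_m` (with `ℱ_n = B^{HF}_m` for
`n ≥ 1` and `ℱ_n = 0` for `n ≤ -1`). -/
def FiltB (m : ℕ) : ℤ → Set (MHF m) := fun n =>
  if n < 0 then {0} else if n = 0 then F0HF m else BHF m

/-- The filtration on `P_k^{HF} ⊗ _kP^{HF}`:
`ℱ₀ = 𝔽·(v*⊗u) ⊆ ℱ₁ = span{v*⊗u, v*⊗v, u*⊗u} ⊆ ℱ₂ = everything`. -/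
def FiltT : ℤ → Set T4 := fun n =>
  if n < 0 then {0}
  else if n = 0 then {w | w.1 = 0 ∧ w.2.1 = 0 ∧ w.2.2.2 = 0}
  else if n = 1 then {w | w.2.1 = 0}
  else Set.univ

/-- The identification of `ℱ₁/ℱ₀(P_k^{HF} ⊗ _kP^{HF})` with the degree-1 part
`span{u*⊗u, v*⊗v}` of `P_k^{Kh} ⊗ _kP^{Kh}`: the class of `w` is recorded by its
`u*⊗u` and `v*⊗v` coordinates. -/
def θ1 (w : T4) : T4 := (w.1, 0, 0, w.2.2.2)

/-- In the `B^{Kh}_m`-bimodule `P_k^{Kh} ⊗ _kP^{Kh}` the element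
`c = u*⊗u + v*⊗v` (coordinates `(1,0,0,1)`) is central: `b·c = c·b` for every
`b ∈ B^{Kh}_m`.  Consequently `γ_k^{Kh}(b) := b·c` is a homomorphism of
`B^{Kh}_m`-bimodules, and it takes the stated values on basis elements. -/
theorem statement_10 (m k : ℕ) (hm : 1 ≤ m) (hk1 : 1 ≤ k) (hk2 : k ≤ m) :
    (∀ b ∈ BKh m, lActKhT m k b (1, 0, 0, 1) = rActKhT m k (1, 0, 0, 1) b) ∧
    (∀ b₁ ∈ BKh m, ∀ b ∈ BKh m, ∀ b₂ ∈ BKh m,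
        γKh m k (b₁ * b * b₂) = rActKhT m k (lActKhT m k b₁ (γKh m k b)) b₂) ∧
    γKh m k (single (idx m k) (idx m k) 1) = (1, 0, 0, 0) ∧
    γKh m k (single (idx m (k - 1)) (idx m (k - 1)) 1) = (0, 0, 0, 1) ∧
    (∀ i : Fin (m + 1), (i : ℕ) ≠ k - 1 → (i : ℕ) ≠ k →
        γKh m k (single i i 1) = 0) ∧
    γKh m k (single (idx m k) (idx m (k - 1)) (dn 0 1)) = (0, 1, 0, 0) := by
  classical
  set K : Fin (m+1) := idx m k with hKdef
  set J : Fin (m+1) := idx m (k-1) with hJdef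
  have hKv : (K : ℕ) = k := Fin.val_cast_of_lt (n := m+1) (a := k) (by omega)
  have hJv : (J : ℕ) = k - 1 := Fin.val_cast_of_lt (n := m+1) (a := k - 1) (by omega)
  have hJK : J < K := by rw [Fin.lt_def, hKv, hJv]; omega
  have hJneK : J ≠ K := ne_of_lt hJK
  -- snd of diagonal entries vanish
  have sndd : ∀ M : MKh m, (∀ i, M i i = 0 ∨ M i i = 1) → ∀ i, (M i i).snd = 0 := by
    intro M h i
    rcases h i with h | h <;> rw [h] <;> simp
  -- product of lower triangular is lower triangular
  have tmul : ∀ M N : MKh m, (∀ i j, i < j → M i j = 0) → (∀ i j, i < j → N i j = 0) →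
      ∀ i j, i < j → (M * N) i j = 0 := by
    intro M N hM hN i j hij
    rw [Matrix.mul_apply]
    refine Finset.sum_eq_zero fun p _ => ?_
    rcases lt_or_ge i p with h | h
    · rw [hM i p h, zero_mul]
    · rw [hN p j (lt_of_le_of_lt h hij), mul_zero]
  -- diagonal entries of products
  have mdiag : ∀ M N : MKh m, (∀ i j, i < j → M i j = 0) → (∀ i j, i < j → N i j = 0) →
      ∀ i, (M * N) i i = M i i * N i i := by
    intro M N hM hN i
    rw [Matrix.mul_apply]
    refine Finset.sum_eq_single i (fun p _ hp => ?_) (by simp)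
    rcases lt_or_ge i p with h | h
    · rw [hM i p h, zero_mul]
    · rw [hN p i (lt_of_le_of_ne h hp), mul_zero]
  -- the (K, J) entry of products
  have mKJ : ∀ M N : MKh m, (∀ i j, i < j → M i j = 0) → (∀ i j, i < j → N i j = 0) →
      (M * N) K J = M K J * N J J + M K K * N K J := by
    intro M N hM hN
    rw [Matrix.mul_apply,
      ← Finset.sum_subset (Finset.subset_univ ({J, K} : Finset (Fin (m+1))))
        (fun p _ hp => ?_), Finset.sum_pair hJneK]
    simp only [Finset.mem_insert, Finset.mem_singleton, not_or] at hp
    have h1 : (p : ℕ) ≠ k - 1 := fun h => hp.1 (Fin.ext (by omega))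
    have h2 : (p : ℕ) ≠ k := fun h => hp.2 (Fin.ext (by omega))
    rcases lt_or_ge K p with h | h
    · rw [hM K p h, zero_mul]
    · have : p < J := by
        rw [Fin.lt_def, hJv]
        rw [Fin.le_def, hKv] at h
        omega
      rw [hN p J this, mul_zero]
  refine ⟨?_, ?_, ?_, ?_, ?_, ?_⟩
  · intro b _
    simp only [lActKhT, rActKhT]
    simp [mul_comm]
  · rintro b₁ ⟨t₁, d₁⟩ b ⟨t, d⟩ b₂ ⟨t₂, d₂⟩
    have t12 : ∀ i j, i < j → (b₁ * b) i j = 0 := tmul b₁ b t₁ t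
    have hKK : (b₁ * b * b₂) K K = b₁ K K * b K K * b₂ K K := by
      rw [mdiag _ _ t12 t₂, mdiag _ _ t₁ t]
    have hJJ : (b₁ * b * b₂) J J = b₁ J J * b J J * b₂ J J := by
      rw [mdiag _ _ t12 t₂, mdiag _ _ t₁ t]
    have hKJ : (b₁ * b * b₂) K J =
        (b₁ K J * b J J + b₁ K K * b K J) * b₂ J J + b₁ K K * b K K * b₂ K J := by
      rw [mKJ _ _ t12 t₂, mKJ _ _ t₁ t, mdiag _ _ t₁ t]
    simp only [γKh, lActKhT, rActKhT, ← hKdef, ← hJdef, hKK, hJJ, hKJ]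
    have e1 := sndd b₁ d₁; have e2 := sndd b d; have e3 := sndd b₂ d₂
    refine Prod.ext ?_ (Prod.ext ?_ (Prod.ext ?_ ?_)) <;>
      simp only [TrivSqZeroExt.fst_mul, TrivSqZeroExt.snd_mul, TrivSqZeroExt.fst_add,
        TrivSqZeroExt.snd_add, smul_eq_mul, MulOpposite.smul_eq_mul_unop, MulOpposite.unop_op,
        e1 K, e1 J, e2 K, e2 J, e3 K, e3 J] <;> ring
  · simp [γKh, lActKhT, ← hKdef, ← hJdef, Matrix.single, hJneK, hJneK.symm]
  · simp [γKh, lActKhT, ← hKdef, ← hJdef, Matrix.single, hJneK, hJneK.symm]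
  · intro i h1 h2
    have hiK : i ≠ K := fun h => h2 (by rw [h, hKv])
    have hiJ : i ≠ J := fun h => h1 (by rw [h, hJv])
    simp [γKh, lActKhT, ← hKdef, ← hJdef, Matrix.single, hiK, hiJ, Prod.ext_iff]
  · simp [γKh, lActKhT, ← hKdef, ← hJdef, Matrix.single, hJneK, hJneK.symm, dn]


end Stmt10
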